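/- Let r be an even positive integer and Γ = {0,…,r−1}×{0,…,r−1}, and let Δ_{θ,φ}^Γ denote the Floquet matrix of the free Laplacian (zero potential) with phases (θ,φ). Then: (a) 4 and −4 are simple eigenvalues of Δ_{0,0}^Γ; (b) 0 is an eigenvalue of Δ_{0,0}^Γ whose multiplicity is congruent to 2 modulo 4; (c) every eigenvalue of Δ_{0,0}^Γ other than 4, −4, and 0 has multiplicity divisible by 4; (d) every eigenvalue of Δ_{π,π}^Γ has multiplicity divisible by 4. -/

import Mathlib

/-- The Floquet extension: given phases θ, φ and ψ : ℂ^Γ (Γ = {0,…,p−1}×{0,…,q−1},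
identified with Fin p × Fin q), `floquetExt p q θ φ ψ` is the unique function
ψ̃ : ℤ² → ℂ extending ψ and satisfying ψ̃_{n+p,m} = e^{iθ} ψ̃_{n,m} and
ψ̃_{n,m+q} = e^{iφ} ψ̃_{n,m} for all n, m ∈ ℤ. -/
noncomputable def floquetExt (p q : ℕ) [NeZero p] [NeZero q] (θ φ : ℝ)
    (ψ : Fin p × Fin q → ℂ) (nm : ℤ × ℤ) : ℂ :=
  Complex.exp (Complex.I * ((θ : ℂ) * ((nm.1 / (p : ℤ) : ℤ) : ℂ) +
      (φ : ℂ) * ((nm.2 / (q : ℤ) : ℤ) : ℂ))) *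
    ψ (⟨(nm.1 % (p : ℤ)).toNat % p, Nat.mod_lt _ (Nat.pos_of_ne_zero (NeZero.ne p))⟩,
       ⟨(nm.2 % (q : ℤ)).toNat % q, Nat.mod_lt _ (Nat.pos_of_ne_zero (NeZero.ne q))⟩)

/-- The multiplicity of μ as an eigenvalue of M: the dimension of the eigenspace. -/
noncomputable def eigMult {n : Type*} [Fintype n] [DecidableEq n]
    (M : Matrix n n ℂ) (μ : ℂ) : ℕ :=
  Module.finrank ℂ ↥(Module.End.eigenspace (Matrix.toLin' M) μ)

open Complex Finset

/-- basic exponential unit `w r c = exp(π i c / r)`. -/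
noncomputable def wexp (r : ℕ) (c : ℤ) : ℂ := Complex.exp (Real.pi * Complex.I * c / r)

lemma wexp_add (r : ℕ) (a b : ℤ) : wexp r (a + b) = wexp r a * wexp r b := by
  unfold wexp
  rw [← Complex.exp_add]
  congr 1
  push_cast
  ring

lemma wexp_zero (r : ℕ) : wexp r 0 = 1 := by simp [wexp]

lemma conj_wexp (r : ℕ) (c : ℤ) : (starRingEnd ℂ) (wexp r c) = wexp r (-c) := by
  unfold wexp
  rw [← Complex.exp_conj]
  congr 1
  simp [map_div₀, Complex.conj_I]

lemma wexp_nat_mul (r : ℕ) (c : ℤ) (n : ℕ) : wexp r (c * n) = wexp r c ^ n := by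
  induction n with
  | zero => simp [wexp_zero]
  | succ n ih =>
    have : c * ((n : ℤ) + 1) = c * n + c := by ring
    push_cast
    rw [this, wexp_add, ih, pow_succ]

lemma wexp_r_mul (r : ℕ) [NeZero r] (m : ℤ) :
    wexp r ((r : ℤ) * m) = Complex.exp (Real.pi * Complex.I * m) := by
  unfold wexp
  congr 1
  have hr : (r : ℂ) ≠ 0 := Nat.cast_ne_zero.mpr (NeZero.ne r)
  field_simp
  push_cast
  ring

lemma wexp_two_r_mul (r : ℕ) [NeZero r] (m : ℤ) : wexp r (2 * r * m) = 1 := by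
  have h : (2 * (r : ℤ) * m) = (r : ℤ) * (2 * m) := by ring
  rw [h, wexp_r_mul]
  have : (Real.pi : ℂ) * Complex.I * (((2 * m : ℤ) : ℂ)) = (m : ℤ) * (2 * Real.pi * Complex.I) := by
    push_cast; ring
  rw [this, Complex.exp_int_mul_two_pi_mul_I]

lemma wexp_ne_one (r : ℕ) [NeZero r] {d : ℤ} (hd : ¬ (r : ℤ) ∣ d) : wexp r (2 * d) ≠ 1 := by
  intro h
  unfold wexp at h
  rw [Complex.exp_eq_one_iff] at h
  obtain ⟨n, hn⟩ := h
  have hr : (r : ℂ) ≠ 0 := Nat.cast_ne_zero.mpr (NeZero.ne r)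
  rw [div_eq_iff hr] at hn
  have hpi : (2 * (Real.pi : ℂ) * Complex.I) ≠ 0 := by
    simp [Real.pi_ne_zero, Complex.I_ne_zero]
  have h2 : (2 * (Real.pi : ℂ) * Complex.I) * (d : ℂ) =
      (2 * (Real.pi : ℂ) * Complex.I) * ((n : ℂ) * r) := by
    push_cast at hn ⊢
    linear_combination hn
  have h3 : (d : ℂ) = ((n * r : ℤ) : ℂ) := by
    push_cast
    exact mul_left_cancel₀ hpi h2
  have h4 : d = n * r := by exact_mod_cast h3
  exact hd ⟨n, by linarith⟩

lemma sum_wexp (r : ℕ) [NeZero r] (d : ℤ) :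
    ∑ n : Fin r, wexp r (2 * d * (n : ℕ)) = if (r : ℤ) ∣ d then (r : ℂ) else 0 := by
  split_ifs with h
  · obtain ⟨e, rfl⟩ := h
    have : ∀ n : Fin r, wexp r (2 * ((r : ℤ) * e) * (n : ℕ)) = 1 := by
      intro n
      have harg : 2 * ((r : ℤ) * e) * (n : ℕ) = 2 * r * (e * n) := by ring
      rw [harg, wexp_two_r_mul]
    simp [this]
  · have hterm : ∀ n : ℕ, wexp r (2 * d * n) = wexp r (2 * d) ^ n := fun n => wexp_nat_mul r _ n
    calc ∑ n : Fin r, wexp r (2 * d * (n : ℕ))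
        = ∑ n ∈ Finset.range r, wexp r (2 * d) ^ n := by
          rw [← Fin.sum_univ_eq_sum_range (fun n => wexp r (2 * d) ^ n) r]
          exact Finset.sum_congr rfl fun n _ => hterm n
      _ = (wexp r (2 * d) ^ r - 1) / (wexp r (2 * d) - 1) := geom_sum_eq (wexp_ne_one r h) r
      _ = 0 := by
          have : wexp r (2 * d) ^ r = 1 := by
            rw [← wexp_nat_mul]
            have : 2 * d * (r : ℕ) = 2 * (r : ℤ) * d := by push_cast; ring
            rw [this, wexp_two_r_mul]
          rw [this]
          simp

/-- eigenvector family -/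
noncomputable def evec (r : ℕ) (t : ℤ) (i : Fin r × Fin r) (p : Fin r × Fin r) : ℂ :=
  wexp r ((2 * (i.1 : ℕ) + t) * (p.1 : ℕ)) * wexp r ((2 * (i.2 : ℕ) + t) * (p.2 : ℕ))

lemma ortho (r : ℕ) [NeZero r] (t : ℤ) (i i₀ : Fin r × Fin r) :
    ∑ p : Fin r × Fin r, (starRingEnd ℂ) (evec r t i₀ p) * evec r t i p
      = if i = i₀ then ((r : ℂ))^2 else 0 := by
  have key : ∀ p : Fin r × Fin r,
      (starRingEnd ℂ) (evec r t i₀ p) * evec r t i p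
        = wexp r (2 * ((i.1 : ℕ) - (i₀.1 : ℕ)) * (p.1 : ℕ)) *
          wexp r (2 * ((i.2 : ℕ) - (i₀.2 : ℕ)) * (p.2 : ℕ)) := by
    intro p
    unfold evec
    rw [map_mul, conj_wexp, conj_wexp]
    rw [show 2 * (((i.1:ℕ):ℤ) - ((i₀.1:ℕ):ℤ)) * ((p.1:ℕ):ℤ)
        = -((2 * ((i₀.1:ℕ):ℤ) + t) * ((p.1:ℕ):ℤ)) + (2 * ((i.1:ℕ):ℤ) + t) * ((p.1:ℕ):ℤ)
        from by ring, wexp_add]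
    rw [show 2 * (((i.2:ℕ):ℤ) - ((i₀.2:ℕ):ℤ)) * ((p.2:ℕ):ℤ)
        = -((2 * ((i₀.2:ℕ):ℤ) + t) * ((p.2:ℕ):ℤ)) + (2 * ((i.2:ℕ):ℤ) + t) * ((p.2:ℕ):ℤ)
        from by ring, wexp_add]
    ring
  simp only [key]
  rw [Fintype.sum_prod_type]
  have : ∑ a : Fin r, ∑ b : Fin r,
      wexp r (2 * ((i.1 : ℕ) - (i₀.1 : ℕ)) * (a : ℕ)) * wexp r (2 * ((i.2 : ℕ) - (i₀.2 : ℕ)) * (b : ℕ))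
      = (∑ a : Fin r, wexp r (2 * ((i.1 : ℕ) - (i₀.1 : ℕ)) * (a : ℕ))) *
        (∑ b : Fin r, wexp r (2 * ((i.2 : ℕ) - (i₀.2 : ℕ)) * (b : ℕ))) := by
    rw [Finset.sum_mul_sum]
  rw [this, sum_wexp, sum_wexp]
  have hdvd : ∀ j j' : Fin r, ((r : ℤ) ∣ ((j : ℕ) : ℤ) - ((j' : ℕ) : ℤ)) ↔ j = j' := by
    intro j j'
    constructor
    · intro ⟨c, hc⟩
      have h1 : ((j : ℕ) : ℤ) < r := by exact_mod_cast j.isLt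
      have h2 : ((j' : ℕ) : ℤ) < r := by exact_mod_cast j'.isLt
      have h3 : (0 : ℤ) ≤ ((j : ℕ) : ℤ) := by positivity
      have h4 : (0 : ℤ) ≤ ((j' : ℕ) : ℤ) := by positivity
      have hr : (0 : ℤ) < r := by exact_mod_cast Nat.pos_of_ne_zero (NeZero.ne r)
      have hc0 : c = 0 := by
        by_contra hc0
        rcases lt_or_gt_of_ne hc0 with h | h
        · have : (r : ℤ) * c ≤ -r := by
            have : c ≤ -1 := by omega
            nlinarith
          omega
        · have : (r : ℤ) * c ≥ r := by
            have : c ≥ 1 := by omega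
            nlinarith
          omega
      rw [hc0, mul_zero] at hc
      have : (j : ℕ) = (j' : ℕ) := by omega
      exact Fin.ext this
    · rintro rfl; simp
  by_cases h1 : i.1 = i₀.1 <;> by_cases h2 : i.2 = i₀.2
  · have : i = i₀ := Prod.ext h1 h2
    rw [if_pos ((hdvd _ _).mpr h1), if_pos ((hdvd _ _).mpr h2), if_pos this]
    ring
  · have : ¬ i = i₀ := fun h => h2 (by rw [h])
    rw [if_neg (fun hd => h2 ((hdvd _ _).mp hd)), if_neg this, mul_zero]
  · have : ¬ i = i₀ := fun h => h1 (by rw [h])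
    rw [if_neg (fun hd => h1 ((hdvd _ _).mp hd)), if_neg this, zero_mul]
  · have : ¬ i = i₀ := fun h => h1 (by rw [h])
    rw [if_neg (fun hd => h1 ((hdvd _ _).mp hd)), if_neg this, zero_mul]

lemma evec_linearIndependent (r : ℕ) [NeZero r] (t : ℤ) :
    LinearIndependent ℂ (evec r t) := by
  rw [linearIndependent_iff']
  intro s g hsum i₀ hi₀
  have happ : ∀ p : Fin r × Fin r, (∑ i ∈ s, g i • evec r t i) p = 0 := by
    intro p; rw [hsum]; rfl
  have h0 : ∑ p : Fin r × Fin r, (starRingEnd ℂ) (evec r t i₀ p) *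
      ((∑ i ∈ s, g i • evec r t i) p) = 0 := by
    simp only [happ, mul_zero, Finset.sum_const_zero]
  have hexp : ∑ p : Fin r × Fin r, (starRingEnd ℂ) (evec r t i₀ p) *
      ((∑ i ∈ s, g i • evec r t i) p)
      = ∑ i ∈ s, g i * (∑ p : Fin r × Fin r, (starRingEnd ℂ) (evec r t i₀ p) * evec r t i p) := by
    simp only [Finset.sum_apply, Pi.smul_apply, smul_eq_mul, Finset.mul_sum]
    rw [Finset.sum_comm]
    congr 1; ext i; congr 1; ext p; ring
  rw [hexp] at h0
  simp only [ortho, mul_ite, mul_zero] at h0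
  rw [Finset.sum_ite_eq' s i₀ (fun i => g i * ((r:ℂ))^2), if_pos hi₀] at h0
  have hr2 : ((r:ℂ))^2 ≠ 0 :=
    pow_ne_zero 2 (Nat.cast_ne_zero.mpr (NeZero.ne r))
  rcases mul_eq_zero.mp h0 with h | h
  · exact h
  · exact absurd h hr2

lemma wexp_split (r : ℕ) [NeZero r] (a t x : ℤ) :
    wexp r ((2*a+t) * x)
      = Complex.exp (Real.pi * Complex.I * t * ((x / (r:ℤ) : ℤ) : ℂ)) *
        wexp r ((2*a+t) * (x % (r:ℤ))) := by
  conv_lhs => rw [← Int.mul_ediv_add_emod x r]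
  rw [show (2*a+t) * ((r:ℤ) * (x / (r:ℤ)) + x % (r:ℤ))
      = 2*(r:ℤ)*(a*(x/(r:ℤ))) + ((r:ℤ)*(t*(x/(r:ℤ))) + (2*a+t)*(x % (r:ℤ))) from by ring,
    wexp_add, wexp_two_r_mul, one_mul, wexp_add, wexp_r_mul]
  have h : Complex.exp ((Real.pi:ℂ) * Complex.I * ((t * (x / (r:ℤ)) : ℤ) : ℂ))
      = Complex.exp ((Real.pi:ℂ) * Complex.I * (t:ℂ) * ((x / (r:ℤ) : ℤ) : ℂ)) := by
    congr 1; push_cast; ring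
  rw [h]

lemma floquetExt_evec (r : ℕ) [NeZero r] (t : ℤ) (i : Fin r × Fin r) (x y : ℤ) :
    floquetExt r r ((t:ℝ) * Real.pi) ((t:ℝ) * Real.pi) (evec r t i) (x, y)
      = wexp r ((2 * ((i.1:ℕ):ℤ) + t) * x) * wexp r ((2 * ((i.2:ℕ):ℤ) + t) * y) := by
  have hr0 : (0:ℤ) < (r:ℤ) := by exact_mod_cast Nat.pos_of_ne_zero (NeZero.ne r)
  have hx1 : 0 ≤ x % (r:ℤ) := Int.emod_nonneg x (by omega)
  have hx2 : x % (r:ℤ) < r := Int.emod_lt_of_pos x hr0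
  have hy1 : 0 ≤ y % (r:ℤ) := Int.emod_nonneg y (by omega)
  have hy2 : y % (r:ℤ) < r := Int.emod_lt_of_pos y hr0
  have hx3 : (x % (r:ℤ)).toNat < r := by omega
  have hy3 : (y % (r:ℤ)).toNat < r := by omega
  have hcx : ((((x % (r:ℤ)).toNat % r : ℕ)) : ℤ) = x % (r:ℤ) := by
    rw [Nat.mod_eq_of_lt hx3, Int.toNat_of_nonneg hx1]
  have hcy : ((((y % (r:ℤ)).toNat % r : ℕ)) : ℤ) = y % (r:ℤ) := by
    rw [Nat.mod_eq_of_lt hy3, Int.toNat_of_nonneg hy1]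
  rw [wexp_split r (i.1:ℕ) t x, wexp_split r (i.2:ℕ) t y]
  unfold floquetExt evec
  simp only
  rw [hcx, hcy]
  rw [show Complex.I * ((((t:ℝ) * Real.pi : ℝ):ℂ) * ((x / (r:ℤ) : ℤ) : ℂ) +
        (((t:ℝ) * Real.pi : ℝ):ℂ) * ((y / (r:ℤ) : ℤ) : ℂ))
      = ((Real.pi:ℂ) * Complex.I * (t:ℂ) * ((x / (r:ℤ) : ℤ) : ℂ)) +
        ((Real.pi:ℂ) * Complex.I * (t:ℂ) * ((y / (r:ℤ) : ℤ) : ℂ)) from by push_cast; ring,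
    Complex.exp_add]
  ring

lemma wexp_add_neg (r : ℕ) [NeZero r] (c : ℤ) :
    wexp r c + wexp r (-c) = ((2 * Real.cos (Real.pi * (c:ℝ) / r) : ℝ) : ℂ) := by
  have h1 : wexp r c = Complex.exp (((Real.pi * (c:ℝ) / r : ℝ) : ℂ) * Complex.I) := by
    unfold wexp; congr 1; push_cast; ring
  have h2 : wexp r (-c) = Complex.exp ((-(((Real.pi * (c:ℝ) / r : ℝ) : ℂ))) * Complex.I) := by
    unfold wexp; congr 1; push_cast; ring
  rw [h1, h2, Complex.exp_mul_I, Complex.exp_mul_I, Complex.cos_neg, Complex.sin_neg]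
  push_cast
  ring

noncomputable def dval (r : ℕ) (t : ℤ) (i : Fin r × Fin r) : ℝ :=
  2 * Real.cos (Real.pi * ((2 * ((i.1:ℕ):ℤ) + t : ℤ) : ℝ) / r) +
  2 * Real.cos (Real.pi * ((2 * ((i.2:ℕ):ℤ) + t : ℤ) : ℝ) / r)

lemma mulVec_evec (r : ℕ) [NeZero r] (t : ℤ) (M : Matrix (Fin r × Fin r) (Fin r × Fin r) ℂ)
    (hM : ∀ (ψ : Fin r × Fin r → ℂ) (ab : Fin r × Fin r),
      M.mulVec ψ ab =
        floquetExt r r ((t:ℝ)*Real.pi) ((t:ℝ)*Real.pi) ψ ((ab.1 : ℤ) - 1, (ab.2 : ℤ)) +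
        floquetExt r r ((t:ℝ)*Real.pi) ((t:ℝ)*Real.pi) ψ ((ab.1 : ℤ) + 1, (ab.2 : ℤ)) +
        floquetExt r r ((t:ℝ)*Real.pi) ((t:ℝ)*Real.pi) ψ ((ab.1 : ℤ), (ab.2 : ℤ) - 1) +
        floquetExt r r ((t:ℝ)*Real.pi) ((t:ℝ)*Real.pi) ψ ((ab.1 : ℤ), (ab.2 : ℤ) + 1))
    (i : Fin r × Fin r) :
    M.mulVec (evec r t i) = ((dval r t i : ℝ) : ℂ) • evec r t i := by
  funext ab
  have := hM (evec r t i) ab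
  rw [this, floquetExt_evec, floquetExt_evec, floquetExt_evec, floquetExt_evec]
  rw [show wexp r ((2 * ((i.1:ℕ):ℤ) + t) * ((ab.1:ℤ) - 1))
      = wexp r (-(2 * ((i.1:ℕ):ℤ) + t)) * wexp r ((2 * ((i.1:ℕ):ℤ) + t) * (ab.1:ℤ)) from by
        rw [← wexp_add]; congr 1; ring]
  rw [show wexp r ((2 * ((i.1:ℕ):ℤ) + t) * ((ab.1:ℤ) + 1))
      = wexp r (2 * ((i.1:ℕ):ℤ) + t) * wexp r ((2 * ((i.1:ℕ):ℤ) + t) * (ab.1:ℤ)) from by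
        rw [← wexp_add]; congr 1; ring]
  rw [show wexp r ((2 * ((i.2:ℕ):ℤ) + t) * ((ab.2:ℤ) - 1))
      = wexp r (-(2 * ((i.2:ℕ):ℤ) + t)) * wexp r ((2 * ((i.2:ℕ):ℤ) + t) * (ab.2:ℤ)) from by
        rw [← wexp_add]; congr 1; ring]
  rw [show wexp r ((2 * ((i.2:ℕ):ℤ) + t) * ((ab.2:ℤ) + 1))
      = wexp r (2 * ((i.2:ℕ):ℤ) + t) * wexp r ((2 * ((i.2:ℕ):ℤ) + t) * (ab.2:ℤ)) from by
        rw [← wexp_add]; congr 1; ring]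
  rw [Pi.smul_apply, smul_eq_mul]
  unfold dval evec
  rw [Complex.ofReal_add, ← wexp_add_neg, ← wexp_add_neg]
  ring

open scoped Classical in
lemma eigMult_eq_card {ι n : Type*} [Fintype ι] [Nonempty ι] [Fintype n] [DecidableEq n]
    (M : Matrix n n ℂ) (e : ι → n → ℂ) (d : ι → ℂ)
    (hcard : Fintype.card ι = Fintype.card n)
    (hind : LinearIndependent ℂ e)
    (heig : ∀ i, M.mulVec (e i) = d i • e i) (μ : ℂ) :
    eigMult M μ = (Finset.univ.filter (fun i => d i = μ)).card := by
  classical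
  have hfr : Fintype.card ι = Module.finrank ℂ (n → ℂ) := by
    rw [Module.finrank_fintype_fun_eq_card]; exact hcard
  let b : Module.Basis ι ℂ (n → ℂ) := basisOfLinearIndependentOfCardEqFinrank hind hfr
  have hb : ⇑b = e := coe_basisOfLinearIndependentOfCardEqFinrank hind hfr
  set f := Matrix.toLin' M with hf
  have hfe : ∀ i, f (b i) = d i • b i := by
    intro i; rw [hb]; rw [Matrix.toLin'_apply]; exact heig i
  have hspan : Module.End.eigenspace f μ = Submodule.span ℂ (e '' {i | d i = μ}) := by
    apply le_antisymm
    · intro v hv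
      rw [Module.End.mem_eigenspace_iff] at hv
      set c : ι → ℂ := b.equivFun v with hc
      have hv2 : v = ∑ i, c i • b i := (b.sum_equivFun v).symm
      have h1 : f v = b.equivFun.symm (fun i => d i * c i) := by
        rw [Module.Basis.equivFun_symm_apply]
        calc f v = ∑ i, c i • f (b i) := by rw [hv2]; simp [map_sum, map_smul]
        _ = ∑ i, (d i * c i) • b i := by
            refine Finset.sum_congr rfl fun i _ => ?_
            rw [hfe i, smul_smul, mul_comm]
      have h2 : μ • v = b.equivFun.symm (fun i => μ * c i) := by
        rw [Module.Basis.equivFun_symm_apply, hv2, Finset.smul_sum]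
        exact Finset.sum_congr rfl fun i _ => by rw [smul_smul]
      have h3 : (fun i => d i * c i) = (fun i => μ * c i) := by
        apply b.equivFun.symm.injective
        rw [← h1, ← h2, hv]
      have h4 : ∀ i, d i ≠ μ → c i = 0 := by
        intro i hi
        have hh := congrFun h3 i
        by_contra hci
        exact hi (mul_right_cancel₀ hci hh)
      rw [hv2]
      apply Submodule.sum_mem
      intro i _
      by_cases hd : d i = μ
      · exact Submodule.smul_mem _ _ (Submodule.subset_span (by rw [hb]; exact ⟨i, hd, rfl⟩))
      · rw [h4 i hd, zero_smul]; exact Submodule.zero_mem _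
    · rw [Submodule.span_le]
      rintro v ⟨i, hi, rfl⟩
      rw [SetLike.mem_coe, Module.End.mem_eigenspace_iff, Matrix.toLin'_apply, heig i, hi]
  rw [eigMult, hspan]
  have himg : e '' {i | d i = μ} = Set.range (e ∘ (Subtype.val : {i // d i = μ} → ι)) := by
    rw [Set.range_comp]
    congr 1
    rw [Subtype.range_coe_subtype]
  rw [himg, finrank_span_eq_card (hind.comp Subtype.val Subtype.val_injective),
    Fintype.card_subtype]

lemma four_dvd_card {α : Type*} [DecidableEq α] (g : α → α) (S : Finset α)
    (hS : ∀ x ∈ S, g x ∈ S) (h4 : ∀ x ∈ S, g (g (g (g x))) = x)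
    (h2 : ∀ x ∈ S, g (g x) ≠ x) : 4 ∣ S.card := by
  induction S using Finset.strongInduction with
  | _ S ih =>
    rcases S.eq_empty_or_nonempty with rfl | ⟨x, hx⟩
    · simp
    · have hgx : g x ∈ S := hS x hx
      have hggx : g (g x) ∈ S := hS _ hgx
      have hgggx : g (g (g x)) ∈ S := hS _ hggx
      have d1 : g x ≠ x := fun h => h2 x hx ((congrArg g h).trans h)
      have d2 : g (g x) ≠ x := h2 x hx
      have d3 : g (g (g x)) ≠ x := fun h =>
        d1 (((h4 x hx).symm.trans (congrArg g h)).symm)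
      have d4 : g (g x) ≠ g x := fun h =>
        d3 ((congrArg g (congrArg g h)).symm.trans (h4 x hx))
      have d5 : g (g (g x)) ≠ g x := h2 (g x) hgx
      have d6 : g (g (g x)) ≠ g (g x) := fun h =>
        d3 ((congrArg g h).symm.trans (h4 x hx))
      set O : Finset α := {x, g x, g (g x), g (g (g x))} with hO
      have hcardO : O.card = 4 := by
        rw [hO]
        rw [Finset.card_insert_of_notMem (by simp [d1.symm, d2.symm, d3.symm])]
        rw [Finset.card_insert_of_notMem (by simp [d4.symm, d5.symm])]
        rw [Finset.card_insert_of_notMem (by simp [d6.symm])]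
        simp
      have hOS : O ⊆ S := by
        intro y hy
        simp only [hO, Finset.mem_insert, Finset.mem_singleton] at hy
        rcases hy with rfl | rfl | rfl | rfl <;> assumption
      have hmemO : ∀ y, y ∈ O ↔ (y = x ∨ y = g x ∨ y = g (g x) ∨ y = g (g (g x))) := by
        intro y; simp [hO]
      have hgpull : ∀ y ∈ S, g y ∈ O → y ∈ O := by
        intro y hy hgy
        have hy4 : g (g (g (g y))) = y := h4 y hy
        rw [hmemO] at hgy
        rcases hgy with h | h | h | h
        · have e1 : g (g (g (g y))) = g (g (g x)) := by rw [h]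
          rw [hy4] at e1
          rw [hmemO]; tauto
        · have e1 : g (g (g (g y))) = g (g (g (g x))) := by rw [h]
          rw [hy4, h4 x hx] at e1
          rw [hmemO]; tauto
        · have e1 : g (g (g (g y))) = g (g (g (g (g x)))) := by rw [h]
          rw [hy4, h4 x hx] at e1
          rw [hmemO]; tauto
        · have e1 : g (g (g (g y))) = g (g (g (g (g (g x))))) := by rw [h]
          rw [hy4, h4 x hx] at e1
          rw [hmemO]; tauto
      have hsub : S \ O ⊂ S := by
        refine Finset.sdiff_ssubset hOS ?_
        exact ⟨x, by rw [hmemO]; tauto⟩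
      have hdvd : 4 ∣ (S \ O).card := by
        apply ih (S \ O) hsub
        · intro y hy
          rw [Finset.mem_sdiff] at hy ⊢
          exact ⟨hS y hy.1, fun h => hy.2 (hgpull y hy.1 h)⟩
        · intro y hy; exact h4 y (Finset.mem_sdiff.mp hy).1
        · intro y hy; exact h2 y (Finset.mem_sdiff.mp hy).1
      have hc : S.card = (S \ O).card + 4 := by
        rw [Finset.card_sdiff_of_subset hOS, hcardO]
        have : 4 ≤ S.card := hcardO ▸ Finset.card_le_card hOS
        omega
      rw [hc]
      omega

lemma card_mod_four_eq_two {α : Type*} [DecidableEq α] (g : α → α) (S F : Finset α)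
    (hFS : F ⊆ S) (hcF : F.card = 2)
    (hS : ∀ x ∈ S, g x ∈ S) (h4 : ∀ x ∈ S, g (g (g (g x))) = x)
    (hfix : ∀ x ∈ S, (g (g x) = x ↔ x ∈ F)) (hgF : ∀ x ∈ F, g x ∈ F) :
    S.card % 4 = 2 := by
  have hpull : ∀ y ∈ S, g y ∈ F → y ∈ F := by
    intro y hy hgy
    -- g y ∈ F so g (g (g y)) = g y; apply g : g⁴ y = g² y, so x = g² y … then y ∈ F
    have h1 : g (g (g y)) = g y := hfix (g y) (hS y hy) |>.mpr hgy
    have h2' : g (g (g (g y))) = g (g y) := congrArg g h1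
    rw [h4 y hy] at h2'
    exact (hfix y hy).mp h2'.symm
  have hdvd : 4 ∣ (S \ F).card := by
    apply four_dvd_card g
    · intro y hy
      rw [Finset.mem_sdiff] at hy ⊢
      exact ⟨hS y hy.1, fun h => hy.2 (hpull y hy.1 h)⟩
    · intro y hy; exact h4 y (Finset.mem_sdiff.mp hy).1
    · intro y hy h
      rw [Finset.mem_sdiff] at hy
      exact hy.2 ((hfix y hy.1).mp h)
  have hc : S.card = (S \ F).card + 2 := by
    rw [Finset.card_sdiff_of_subset hFS, hcF]
    have : 2 ≤ S.card := hcF ▸ Finset.card_le_card hFS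
    omega
  omega

noncomputable def cv (r : ℕ) (t : ℤ) (j : Fin r) : ℝ :=
  2 * Real.cos (Real.pi * ((2 * ((j:ℕ):ℤ) + t : ℤ) : ℝ) / r)

lemma dval_eq_cv (r : ℕ) (t : ℤ) (i : Fin r × Fin r) :
    dval r t i = cv r t i.1 + cv r t i.2 := rfl

lemma cv_le_two (r : ℕ) (t : ℤ) (j : Fin r) : cv r t j ≤ 2 := by
  unfold cv
  nlinarith [Real.cos_le_one (Real.pi * ((2 * ((j:ℕ):ℤ) + t : ℤ) : ℝ) / r)]

lemma neg_two_le_cv (r : ℕ) (t : ℤ) (j : Fin r) : -2 ≤ cv r t j := by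
  unfold cv
  nlinarith [Real.neg_one_le_cos (Real.pi * ((2 * ((j:ℕ):ℤ) + t : ℤ) : ℝ) / r)]

lemma cos_arg_shift (r : ℕ) [NeZero r] (u : ℤ) :
    Real.cos (Real.pi * ((2*(r:ℤ) - u : ℤ) : ℝ) / r) = Real.cos (Real.pi * ((u : ℤ):ℝ) / r) := by
  have hr : (r:ℝ) ≠ 0 := Nat.cast_ne_zero.mpr (NeZero.ne r)
  have harg : Real.pi * ((2*(r:ℤ) - u : ℤ) : ℝ) / r = 2*Real.pi - Real.pi * ((u:ℤ):ℝ) / r := by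
    push_cast
    field_simp
  rw [harg, Real.cos_sub, Real.cos_two_pi, Real.sin_two_pi]
  ring

lemma cv_neg (r : ℕ) [NeZero r] (j : Fin r) : cv r 0 (-j) = cv r 0 j := by
  by_cases h0 : j = 0
  · rw [h0, neg_zero]
  · have hj : 0 < (j:ℕ) := Nat.pos_of_ne_zero (fun hc => h0 (Fin.ext (by simp [hc])))
    have hlt : (j:ℕ) < r := j.isLt
    unfold cv
    congr 1
    rw [Fin.coe_neg, Nat.mod_eq_of_lt (by omega)]
    have harg : (2 * (((r - (j:ℕ) : ℕ)):ℤ) + 0 : ℤ) = 2*(r:ℤ) - (2*((j:ℕ):ℤ) + 0) := by omega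
    rw [harg, cos_arg_shift]

lemma cv_rev (r : ℕ) [NeZero r] (j : Fin r) : cv r 1 j.rev = cv r 1 j := by
  have hlt : (j:ℕ) < r := j.isLt
  unfold cv
  congr 1
  have hval : (j.rev : ℕ) = r - 1 - (j:ℕ) := by rw [Fin.val_rev]; omega
  rw [hval]
  have harg : (2 * (((r - 1 - (j:ℕ) : ℕ)):ℤ) + 1 : ℤ) = 2*(r:ℤ) - (2*((j:ℕ):ℤ) + 1) := by omega
  rw [harg, cos_arg_shift]

lemma cv_val_zero (r : ℕ) [NeZero r] (j : Fin r) (h0 : (j:ℕ) = 0) : cv r 0 j = 2 := by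
  unfold cv
  rw [h0]
  norm_num

lemma cv_val_half (r : ℕ) [NeZero r] (j : Fin r) (hh : 2 * (j:ℕ) = r) : cv r 0 j = -2 := by
  unfold cv
  have hr : (r:ℝ) ≠ 0 := Nat.cast_ne_zero.mpr (NeZero.ne r)
  have harg : (2 * ((j:ℕ):ℤ) + 0 : ℤ) = (r:ℤ) := by omega
  rw [harg]
  push_cast
  rw [mul_div_assoc, div_self hr, mul_one, Real.cos_pi]
  norm_num

lemma cv_eq_two (r : ℕ) [NeZero r] (j : Fin r) (hj : cv r 0 j = 2) : (j:ℕ) = 0 := by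
  unfold cv at hj
  have hr : (0:ℝ) < r := Nat.cast_pos.mpr (Nat.pos_of_ne_zero (NeZero.ne r))
  have hcos : Real.cos (Real.pi * ((2 * ((j:ℕ):ℤ) + 0 : ℤ) : ℝ) / r) = 1 := by linarith
  rw [Real.cos_eq_one_iff] at hcos
  obtain ⟨n, hn⟩ := hcos
  rw [eq_div_iff (ne_of_gt hr)] at hn
  have h2 : (2*Real.pi) * ((n:ℝ) * r) = (2*Real.pi) * ((j:ℕ):ℝ) := by
    push_cast at hn ⊢
    linear_combination hn
  have h3 : (n:ℝ) * r = ((j:ℕ):ℝ) :=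
    mul_left_cancel₀ (by positivity : (0:ℝ) < 2*Real.pi).ne' h2
  have h4 : n * (r:ℤ) = ((j:ℕ):ℤ) := by exact_mod_cast h3
  have h5 : ((j:ℕ):ℤ) < r := by exact_mod_cast j.isLt
  have h6 : (0:ℤ) ≤ ((j:ℕ):ℤ) := Int.natCast_nonneg _
  have hrz : (0:ℤ) < r := by exact_mod_cast Nat.pos_of_ne_zero (NeZero.ne r)
  rcases lt_trichotomy n 0 with h | h | h
  · exfalso; nlinarith
  · rw [h] at h4; simp at h4; omega
  · exfalso; nlinarith

lemma cv_eq_neg_two (r : ℕ) [NeZero r] (j : Fin r) (hj : cv r 0 j = -2) : 2 * (j:ℕ) = r := by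
  unfold cv at hj
  have hr : (0:ℝ) < r := Nat.cast_pos.mpr (Nat.pos_of_ne_zero (NeZero.ne r))
  have hcos : Real.cos (Real.pi * ((2 * ((j:ℕ):ℤ) + 0 : ℤ) : ℝ) / r) = -1 := by linarith
  have hcos2 : Real.cos (Real.pi * ((2 * ((j:ℕ):ℤ) + 0 : ℤ) : ℝ) / r - Real.pi) = 1 := by
    rw [Real.cos_sub_pi, hcos]; norm_num
  rw [Real.cos_eq_one_iff] at hcos2
  obtain ⟨n, hn⟩ := hcos2
  have hn' : (n:ℝ) * (2*Real.pi) + Real.pi = Real.pi * ((2 * ((j:ℕ):ℤ) + 0 : ℤ) : ℝ) / r := by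
    linarith
  rw [eq_div_iff (ne_of_gt hr)] at hn'
  have h2 : (2*Real.pi) * (((2*n+1 : ℤ):ℝ) * r) = (2*Real.pi) * (2*((j:ℕ):ℝ)) := by
    push_cast at hn' ⊢
    linear_combination 2 * hn'
  have h3 : ((2*n+1 : ℤ):ℝ) * r = 2*((j:ℕ):ℝ) :=
    mul_left_cancel₀ (by positivity : (0:ℝ) < 2*Real.pi).ne' h2
  have h4 : (2*n+1) * (r:ℤ) = 2*((j:ℕ):ℤ) := by exact_mod_cast h3
  have h5 : ((j:ℕ):ℤ) < r := by exact_mod_cast j.isLt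
  have h6 : (0:ℤ) ≤ ((j:ℕ):ℤ) := Int.natCast_nonneg _
  have hrz : (0:ℤ) < r := by exact_mod_cast Nat.pos_of_ne_zero (NeZero.ne r)
  rcases lt_trichotomy n 0 with h | h | h
  · exfalso
    have hm : 2*n+1 ≤ -1 := by omega
    nlinarith
  · rw [h] at h4
    have : (r:ℤ) = 2*((j:ℕ):ℤ) := by linarith
    omega
  · exfalso
    have hm : 2*n+1 ≥ 3 := by omega
    nlinarith

lemma neg_eq_self_iff (r : ℕ) [NeZero r] (j : Fin r) :
    -j = j ↔ ((j:ℕ) = 0 ∨ 2*(j:ℕ) = r) := by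
  have hlt : (j:ℕ) < r := j.isLt
  constructor
  · intro hj
    have hval : ((-j : Fin r) : ℕ) = (j : ℕ) := by rw [hj]
    rw [Fin.coe_neg] at hval
    rcases Nat.eq_zero_or_pos (j:ℕ) with h0 | hpos
    · left; exact h0
    · right
      rw [Nat.mod_eq_of_lt (by omega)] at hval
      omega
  · intro hj
    apply Fin.ext
    rw [Fin.coe_neg]
    rcases hj with h0 | hh
    · rw [h0]
      simp
    · rw [Nat.mod_eq_of_lt (by omega)]
      omega

def gz (r : ℕ) [NeZero r] (p : Fin r × Fin r) : Fin r × Fin r := (p.2, -p.1)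

def gp (r : ℕ) (p : Fin r × Fin r) : Fin r × Fin r := (p.2, p.1.rev)

lemma gz_gz (r : ℕ) [NeZero r] (p : Fin r × Fin r) : gz r (gz r p) = (-p.1, -p.2) := rfl

lemma gz4 (r : ℕ) [NeZero r] (p : Fin r × Fin r) : gz r (gz r (gz r (gz r p))) = p := by
  simp [gz, Prod.ext_iff]

lemma gp_gp (r : ℕ) (p : Fin r × Fin r) : gp r (gp r p) = (p.1.rev, p.2.rev) := rfl

lemma gp4 (r : ℕ) (p : Fin r × Fin r) : gp r (gp r (gp r (gp r p))) = p := by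
  simp [gp, Prod.ext_iff, Fin.rev_rev]

lemma dval_gz (r : ℕ) [NeZero r] (p : Fin r × Fin r) : dval r 0 (gz r p) = dval r 0 p := by
  rw [dval_eq_cv, dval_eq_cv]
  show cv r 0 p.2 + cv r 0 (-p.1) = _
  rw [cv_neg]
  ring

lemma dval_gp (r : ℕ) [NeZero r] (p : Fin r × Fin r) : dval r 1 (gp r p) = dval r 1 p := by
  rw [dval_eq_cv, dval_eq_cv]
  show cv r 1 p.2 + cv r 1 p.1.rev = _
  rw [cv_rev]
  ring

/-- for even r and Γ = {0,…,r−1}², the free Floquet matrix Δ_{0,0}^Γ has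
±4 as simple eigenvalues, 0 as an eigenvalue of multiplicity ≡ 2 (mod 4), and all its
other eigenvalues have multiplicity divisible by 4; all eigenvalues of Δ_{π,π}^Γ have
multiplicity divisible by 4. -/
theorem floquet_free_laplacian_multiplicities
    (r : ℕ) [NeZero r] (hr : Even r)
    (M00 Mpp : Matrix (Fin r × Fin r) (Fin r × Fin r) ℂ)
    (hM00 : ∀ (ψ : Fin r × Fin r → ℂ) (ab : Fin r × Fin r),
      M00.mulVec ψ ab =
        floquetExt r r 0 0 ψ ((ab.1 : ℤ) - 1, (ab.2 : ℤ)) +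
        floquetExt r r 0 0 ψ ((ab.1 : ℤ) + 1, (ab.2 : ℤ)) +
        floquetExt r r 0 0 ψ ((ab.1 : ℤ), (ab.2 : ℤ) - 1) +
        floquetExt r r 0 0 ψ ((ab.1 : ℤ), (ab.2 : ℤ) + 1))
    (hMpp : ∀ (ψ : Fin r × Fin r → ℂ) (ab : Fin r × Fin r),
      Mpp.mulVec ψ ab =
        floquetExt r r Real.pi Real.pi ψ ((ab.1 : ℤ) - 1, (ab.2 : ℤ)) +
        floquetExt r r Real.pi Real.pi ψ ((ab.1 : ℤ) + 1, (ab.2 : ℤ)) +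
        floquetExt r r Real.pi Real.pi ψ ((ab.1 : ℤ), (ab.2 : ℤ) - 1) +
        floquetExt r r Real.pi Real.pi ψ ((ab.1 : ℤ), (ab.2 : ℤ) + 1)) :
    eigMult M00 4 = 1 ∧ eigMult M00 (-4) = 1 ∧
    eigMult M00 0 % 4 = 2 ∧
    (∀ μ : ℂ, μ ≠ 4 → μ ≠ -4 → μ ≠ 0 → 4 ∣ eigMult M00 μ) ∧
    (∀ μ : ℂ, 4 ∣ eigMult Mpp μ) := by
  classical
  obtain ⟨h, hrh⟩ := hr
  have hh1 : 0 < h := by have := NeZero.ne r; omega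
  have hlt : h < r := by omega
  set hf : Fin r := ⟨h, hlt⟩ with hhf
  haveI hne : Nonempty (Fin r × Fin r) := ⟨(0, 0)⟩
  -- restated hypotheses in the (t : ℤ) * π form
  have hM00' : ∀ (ψ : Fin r × Fin r → ℂ) (ab : Fin r × Fin r),
      M00.mulVec ψ ab =
        floquetExt r r (((0:ℤ):ℝ)*Real.pi) (((0:ℤ):ℝ)*Real.pi) ψ ((ab.1 : ℤ) - 1, (ab.2 : ℤ)) +
        floquetExt r r (((0:ℤ):ℝ)*Real.pi) (((0:ℤ):ℝ)*Real.pi) ψ ((ab.1 : ℤ) + 1, (ab.2 : ℤ)) +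
        floquetExt r r (((0:ℤ):ℝ)*Real.pi) (((0:ℤ):ℝ)*Real.pi) ψ ((ab.1 : ℤ), (ab.2 : ℤ) - 1) +
        floquetExt r r (((0:ℤ):ℝ)*Real.pi) (((0:ℤ):ℝ)*Real.pi) ψ ((ab.1 : ℤ), (ab.2 : ℤ) + 1) := by
    intro ψ ab
    rw [show (((0:ℤ):ℝ) * Real.pi) = (0:ℝ) by norm_num]
    exact hM00 ψ ab
  have hMpp' : ∀ (ψ : Fin r × Fin r → ℂ) (ab : Fin r × Fin r),
      Mpp.mulVec ψ ab =
        floquetExt r r (((1:ℤ):ℝ)*Real.pi) (((1:ℤ):ℝ)*Real.pi) ψ ((ab.1 : ℤ) - 1, (ab.2 : ℤ)) +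
        floquetExt r r (((1:ℤ):ℝ)*Real.pi) (((1:ℤ):ℝ)*Real.pi) ψ ((ab.1 : ℤ) + 1, (ab.2 : ℤ)) +
        floquetExt r r (((1:ℤ):ℝ)*Real.pi) (((1:ℤ):ℝ)*Real.pi) ψ ((ab.1 : ℤ), (ab.2 : ℤ) - 1) +
        floquetExt r r (((1:ℤ):ℝ)*Real.pi) (((1:ℤ):ℝ)*Real.pi) ψ ((ab.1 : ℤ), (ab.2 : ℤ) + 1) := by
    intro ψ ab
    rw [show (((1:ℤ):ℝ) * Real.pi) = Real.pi by norm_num]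
    exact hMpp ψ ab
  have heig0 : ∀ i, M00.mulVec (evec r 0 i) = ((dval r 0 i : ℝ) : ℂ) • evec r 0 i :=
    mulVec_evec r 0 M00 hM00'
  have heig1 : ∀ i, Mpp.mulVec (evec r 1 i) = ((dval r 1 i : ℝ) : ℂ) • evec r 1 i :=
    mulVec_evec r 1 Mpp hMpp'
  have hm0 := fun μ => eigMult_eq_card M00 (evec r 0) (fun i => ((dval r 0 i : ℝ) : ℂ)) rfl
    (evec_linearIndependent r 0) heig0 μ
  have hm1 := fun μ => eigMult_eq_card Mpp (evec r 1) (fun i => ((dval r 1 i : ℝ) : ℂ)) rfl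
    (evec_linearIndependent r 1) heig1 μ
  -- value computations at the special points
  have hcv0 : cv r 0 (0 : Fin r) = 2 := cv_val_zero r 0 (by simp)
  have hcvh : cv r 0 hf = -2 := cv_val_half r hf (by simp [hhf]; omega)
  refine ⟨?_, ?_, ?_, ?_, ?_⟩
  -- (a) eigMult M00 4 = 1
  · rw [hm0 4]
    have hset : (Finset.univ.filter (fun i => ((dval r 0 i : ℝ) : ℂ) = 4))
        = {((0 : Fin r), (0 : Fin r))} := by
      ext p
      simp only [Finset.mem_filter, Finset.mem_univ, true_and, Finset.mem_singleton]
      constructor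
      · intro hp
        have hp' : dval r 0 p = 4 := by exact_mod_cast hp
        rw [dval_eq_cv] at hp'
        have h1 := cv_le_two r 0 p.1
        have h2 := cv_le_two r 0 p.2
        have z1 : (p.1 : ℕ) = 0 := cv_eq_two r p.1 (by linarith)
        have z2 : (p.2 : ℕ) = 0 := cv_eq_two r p.2 (by linarith)
        rw [Prod.ext_iff, Fin.ext_iff, Fin.ext_iff]
        simp [z1, z2]
      · rintro rfl
        have hv : dval r 0 ((0 : Fin r), (0 : Fin r)) = 4 := by
          rw [dval_eq_cv]
          show cv r 0 (0 : Fin r) + cv r 0 (0 : Fin r) = 4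
          rw [hcv0]; norm_num
        rw [hv]; norm_num
    rw [hset, Finset.card_singleton]
  -- (b) eigMult M00 (-4) = 1
  · rw [hm0 (-4)]
    have hset : (Finset.univ.filter (fun i => ((dval r 0 i : ℝ) : ℂ) = -4))
        = {(hf, hf)} := by
      ext p
      simp only [Finset.mem_filter, Finset.mem_univ, true_and, Finset.mem_singleton]
      constructor
      · intro hp
        have hp' : dval r 0 p = -4 := by exact_mod_cast hp
        rw [dval_eq_cv] at hp'
        have h1 := neg_two_le_cv r 0 p.1
        have h2 := neg_two_le_cv r 0 p.2
        have z1 : 2 * (p.1 : ℕ) = r := cv_eq_neg_two r p.1 (by linarith)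
        have z2 : 2 * (p.2 : ℕ) = r := cv_eq_neg_two r p.2 (by linarith)
        rw [Prod.ext_iff, Fin.ext_iff, Fin.ext_iff]
        constructor <;> simp [hhf] <;> omega
      · rintro rfl
        have hv : dval r 0 (hf, hf) = -4 := by
          rw [dval_eq_cv]
          show cv r 0 hf + cv r 0 hf = -4
          rw [hcvh]; norm_num
        rw [hv]; norm_num
    rw [hset, Finset.card_singleton]
  -- (c) eigMult M00 0 % 4 = 2
  · rw [hm0 0]
    apply card_mod_four_eq_two (gz r) _ ({((0 : Fin r), hf), (hf, (0 : Fin r))} : Finset _)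
    -- F ⊆ S
    · intro p hp
      simp only [Finset.mem_insert, Finset.mem_singleton] at hp
      have hv1 : dval r 0 ((0 : Fin r), hf) = 0 := by
        rw [dval_eq_cv]
        show cv r 0 (0 : Fin r) + cv r 0 hf = 0
        rw [hcv0, hcvh]; norm_num
      have hv2 : dval r 0 (hf, (0 : Fin r)) = 0 := by
        rw [dval_eq_cv]
        show cv r 0 hf + cv r 0 (0 : Fin r) = 0
        rw [hcv0, hcvh]; norm_num
      rcases hp with rfl | rfl <;>
        simp only [Finset.mem_filter, Finset.mem_univ, true_and] <;>
        [rw [hv1]; rw [hv2]] <;> norm_num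
    -- F.card = 2
    · rw [Finset.card_insert_of_notMem, Finset.card_singleton]
      simp only [Finset.mem_singleton, Prod.ext_iff, Fin.ext_iff]
      simp [hhf]
      omega
    -- stability of S
    · intro p hp
      simp only [Finset.mem_filter, Finset.mem_univ, true_and] at hp ⊢
      rw [show ((dval r 0 (gz r p) : ℝ) : ℂ) = ((dval r 0 p : ℝ) : ℂ) by rw [dval_gz]]
      exact hp
    -- g⁴ = id
    · intro p _; exact gz4 r p
    -- fixed points of g² within S are exactly F
    · intro p hp
      simp only [Finset.mem_filter, Finset.mem_univ, true_and] at hp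
      have hp' : dval r 0 p = 0 := by exact_mod_cast hp
      rw [dval_eq_cv] at hp'
      constructor
      · intro hfix
        rw [gz_gz, Prod.ext_iff] at hfix
        have e1 := (neg_eq_self_iff r p.1).mp hfix.1
        have e2 := (neg_eq_self_iff r p.2).mp hfix.2
        simp only [Finset.mem_insert, Finset.mem_singleton, Prod.ext_iff, Fin.ext_iff]
        rcases e1 with z1 | z1 <;> rcases e2 with z2 | z2
        · exfalso
          rw [cv_val_zero r p.1 z1, cv_val_zero r p.2 z2] at hp'
          norm_num at hp'
        · left
          have hfv : (hf:ℕ) = h := rfl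
          constructor
          · simpa using z1
          · omega
        · right
          have hfv : (hf:ℕ) = h := rfl
          constructor
          · omega
          · simpa using z2
        · exfalso
          rw [cv_val_half r p.1 z1, cv_val_half r p.2 z2] at hp'
          norm_num at hp'
      · intro hmem
        simp only [Finset.mem_insert, Finset.mem_singleton] at hmem
        have hnegz : -(0 : Fin r) = 0 := neg_zero
        have hnegh : -hf = hf := (neg_eq_self_iff r hf).mpr (Or.inr (by simp [hhf]; omega))
        rcases hmem with rfl | rfl <;> rw [gz_gz, Prod.ext_iff] <;>
          exact ⟨by simp [hnegz, hnegh], by simp [hnegz, hnegh]⟩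
    -- g preserves F
    · intro p hp
      simp only [Finset.mem_insert, Finset.mem_singleton] at hp ⊢
      have hnegz : -(0 : Fin r) = 0 := neg_zero
      have hnegh : -hf = hf := (neg_eq_self_iff r hf).mpr (Or.inr (by simp [hhf]; omega))
      rcases hp with rfl | rfl
      · right; show ((hf, -(0:Fin r)) : Fin r × Fin r) = _
        rw [hnegz]
      · left; show (((0:Fin r), -hf) : Fin r × Fin r) = _
        rw [hnegh]
  -- (d) other eigenvalues of M00
  · intro μ hμ4 hμm4 hμ0
    rw [hm0 μ]
    apply four_dvd_card (gz r)
    · intro p hp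
      simp only [Finset.mem_filter, Finset.mem_univ, true_and] at hp ⊢
      rw [show ((dval r 0 (gz r p) : ℝ) : ℂ) = ((dval r 0 p : ℝ) : ℂ) by rw [dval_gz]]
      exact hp
    · intro p _; exact gz4 r p
    · intro p hp hfix
      simp only [Finset.mem_filter, Finset.mem_univ, true_and] at hp
      rw [gz_gz, Prod.ext_iff] at hfix
      have e1 := (neg_eq_self_iff r p.1).mp hfix.1
      have e2 := (neg_eq_self_iff r p.2).mp hfix.2
      have hd := dval_eq_cv r 0 p
      rcases e1 with z1 | z1 <;> rcases e2 with z2 | z2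
      · rw [cv_val_zero r p.1 z1, cv_val_zero r p.2 z2] at hd
        rw [hd] at hp; norm_num at hp; exact hμ4 hp.symm  -- careful direction
      · rw [cv_val_zero r p.1 z1, cv_val_half r p.2 z2] at hd
        rw [hd] at hp; norm_num at hp; exact hμ0 hp.symm
      · rw [cv_val_half r p.1 z1, cv_val_zero r p.2 z2] at hd
        rw [hd] at hp; norm_num at hp; exact hμ0 hp.symm
      · rw [cv_val_half r p.1 z1, cv_val_half r p.2 z2] at hd
        rw [hd] at hp; norm_num at hp; exact hμm4 hp.symm
  -- (e) all eigenvalues of Mpp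
  · intro μ
    rw [hm1 μ]
    apply four_dvd_card (gp r)
    · intro p hp
      simp only [Finset.mem_filter, Finset.mem_univ, true_and] at hp ⊢
      rw [show ((dval r 1 (gp r p) : ℝ) : ℂ) = ((dval r 1 p : ℝ) : ℂ) by rw [dval_gp]]
      exact hp
    · intro p _; exact gp4 r p
    · intro p _ hfix
      rw [gp_gp, Prod.ext_iff] at hfix
      have hfix1 : p.1.rev = p.1 := hfix.1
      have e1 : (p.1.rev : ℕ) = (p.1 : ℕ) := by rw [hfix1]
      rw [Fin.val_rev] at e1
      have := p.1.isLt
      omega
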